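/- Let Ω = (X, M, μ) be a measure space, 1 ≤ p < ∞ with p ≠ 2, and let φ : S → L^p(Ω) be given on a finite set of nodes S ⊆ ℕ*. Define σ(φ) = Σ_{ν|ν′} σ(φ(ν), φ(ν′)) + Σ_{ν′ ⊃ ν} σ(φ(ν′) − φ(ν), φ(ν′)), where ν, ν′ range over S, ν|ν′ means ν and ν′ are incomparable in the prefix order, and σ(f,g) = |4 − 2(√2)^p|^{−1} · |2(‖f‖_p^p + ‖g‖_p^p) − (‖f−g‖_p^p + ‖f+g‖_p^p)|. Then φ is a separating antitone map if and only if σ(φ) = 0. -/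

import Mathlib

open MeasureTheory Set
open scoped Classical

variable {X : Type*} [MeasurableSpace X]

/-- The `p`-th power of the `L^p` norm: `‖f‖_p^p = ∫ |f|^p dμ`. -/
noncomputable def pnormP (μ : Measure X) (p : ℝ) (f : X → ℂ) : ℝ :=
  ∫ t, ‖f t‖ ^ p ∂μ

/-- The functional `σ(f,g)` testing disjointness of supports. -/
noncomputable def sigmaPair (μ : Measure X) (p : ℝ) (f g : X → ℂ) : ℝ :=
  |4 - 2 * Real.sqrt 2 ^ p|⁻¹ *
    |2 * (pnormP μ p f + pnormP μ p g) - (pnormP μ p (f - g) + pnormP μ p (f + g))|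

/-- `σ(φ) = Σ_{ν|ν'} σ(φ(ν), φ(ν')) + Σ_{ν ⊂ ν'} σ(φ(ν') − φ(ν), φ(ν'))`. -/
noncomputable def sigmaMap (μ : Measure X) (p : ℝ) (S : Finset (List ℕ))
    (φ : List ℕ → X → ℂ) : ℝ :=
  (∑ q ∈ (S ×ˢ S).filter (fun q => ¬ q.1 <+: q.2 ∧ ¬ q.2 <+: q.1),
      sigmaPair μ p (φ q.1) (φ q.2)) +
  ∑ q ∈ (S ×ˢ S).filter (fun q => q.1 <+: q.2 ∧ q.1 ≠ q.2),
      sigmaPair μ p (φ q.2 - φ q.1) (φ q.2)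

noncomputable def Dp (p : ℝ) (a b : ℂ) : ℝ :=
  2 * (‖a‖ ^ p + ‖b‖ ^ p) -
    (‖a - b‖ ^ p + ‖a + b‖ ^ p)

lemma aux_sup_strict {α β r : ℝ} (hα : 0 < α) (hβ : 0 < β) (hr : 1 < r) :
    α ^ r + β ^ r < (α + β) ^ r := by
  have hab : (0:ℝ) < α + β := by linarith
  have h1 : α ^ (r - 1) < (α + β) ^ (r - 1) :=
    Real.rpow_lt_rpow hα.le (by linarith) (by linarith)
  have h2 : β ^ (r - 1) < (α + β) ^ (r - 1) :=
    Real.rpow_lt_rpow hβ.le (by linarith) (by linarith)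
  have e1 : α ^ r = α * α ^ (r - 1) := by
    have e := Real.rpow_add hα 1 (r - 1)
    rw [Real.rpow_one, show (1:ℝ) + (r - 1) = r by ring] at e
    rw [e]
  have e2 : β ^ r = β * β ^ (r - 1) := by
    have e := Real.rpow_add hβ 1 (r - 1)
    rw [Real.rpow_one, show (1:ℝ) + (r - 1) = r by ring] at e
    rw [e]
  have e3 : (α + β) ^ r = α * (α + β) ^ (r - 1) + β * (α + β) ^ (r - 1) := by
    have e := Real.rpow_add hab 1 (r - 1)
    rw [Real.rpow_one, show (1:ℝ) + (r - 1) = r by ring] at e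
    rw [e]; ring
  rw [e1, e2, e3]
  have := mul_lt_mul_of_pos_left h1 hα
  have := mul_lt_mul_of_pos_left h2 hβ
  linarith

lemma aux_sub_strict {α β r : ℝ} (hα : 0 < α) (hβ : 0 < β) (hr0 : 0 < r) (hr : r < 1) :
    (α + β) ^ r < α ^ r + β ^ r := by
  have hab : (0:ℝ) < α + β := by linarith
  have h1 : (α + β) ^ (r - 1) < α ^ (r - 1) :=
    Real.rpow_lt_rpow_of_neg hα (by linarith) (by linarith)
  have h2 : (α + β) ^ (r - 1) < β ^ (r - 1) :=
    Real.rpow_lt_rpow_of_neg hβ (by linarith) (by linarith)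
  have e1 : α ^ r = α * α ^ (r - 1) := by
    have e := Real.rpow_add hα 1 (r - 1)
    rw [Real.rpow_one, show (1:ℝ) + (r - 1) = r by ring] at e
    rw [e]
  have e2 : β ^ r = β * β ^ (r - 1) := by
    have e := Real.rpow_add hβ 1 (r - 1)
    rw [Real.rpow_one, show (1:ℝ) + (r - 1) = r by ring] at e
    rw [e]
  have e3 : (α + β) ^ r = α * (α + β) ^ (r - 1) + β * (α + β) ^ (r - 1) := by
    have e := Real.rpow_add hab 1 (r - 1)
    rw [Real.rpow_one, show (1:ℝ) + (r - 1) = r by ring] at e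
    rw [e]; ring
  rw [e1, e2, e3]
  have := mul_lt_mul_of_pos_left h1 hα
  have := mul_lt_mul_of_pos_left h2 hβ
  linarith

lemma aux_sup_weak {α β r : ℝ} (hα : 0 ≤ α) (hβ : 0 ≤ β) (hr : 1 ≤ r) :
    α ^ r + β ^ r ≤ (α + β) ^ r := by
  have hr0 : (0:ℝ) < r := by linarith
  rcases hα.eq_or_lt with h | h
  · simp [← h, Real.zero_rpow hr0.ne']
  rcases hβ.eq_or_lt with h' | h'
  · simp [← h', Real.zero_rpow hr0.ne']
  rcases hr.eq_or_lt with h'' | h''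
  · simp [← h'']
  · exact (aux_sup_strict h h' h'').le

lemma aux_sub_weak {α β r : ℝ} (hα : 0 ≤ α) (hβ : 0 ≤ β) (hr0 : 0 < r) (hr : r ≤ 1) :
    (α + β) ^ r ≤ α ^ r + β ^ r := by
  rcases hα.eq_or_lt with h | h
  · simp [← h, Real.zero_rpow hr0.ne']
  rcases hβ.eq_or_lt with h' | h'
  · simp [← h', Real.zero_rpow hr0.ne']
  rcases hr.eq_or_lt with h'' | h''
  · simp [h'']
  · exact (aux_sub_strict h h' hr0 h'').le

lemma aux_mid_concave {u v r : ℝ} (hu : 0 ≤ u) (hv : 0 ≤ v) (hr0 : 0 ≤ r) (hr : r ≤ 1) :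
    u ^ r + v ^ r ≤ 2 * (((u + v) / 2) ^ r) := by
  have := (Real.concaveOn_rpow hr0 hr).2 (Set.mem_Ici.2 hu) (Set.mem_Ici.2 hv)
    (by norm_num : (0:ℝ) ≤ 1/2) (by norm_num : (0:ℝ) ≤ 1/2) (by norm_num)
  simp only [smul_eq_mul] at this
  have h2 : (1:ℝ)/2 * u + 1/2 * v = (u + v) / 2 := by ring
  rw [h2] at this
  linarith

lemma aux_mid_convex {u v r : ℝ} (hu : 0 ≤ u) (hv : 0 ≤ v) (hr : 1 ≤ r) :
    2 * (((u + v) / 2) ^ r) ≤ u ^ r + v ^ r := by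
  have := (convexOn_rpow hr).2 (Set.mem_Ici.2 hu) (Set.mem_Ici.2 hv)
    (by norm_num : (0:ℝ) ≤ 1/2) (by norm_num : (0:ℝ) ≤ 1/2) (by norm_num)
  simp only [smul_eq_mul] at this
  have h2 : (1:ℝ)/2 * u + 1/2 * v = (u + v) / 2 := by ring
  rw [h2] at this
  linarith

lemma abs_rpow_eq (x : ℂ) (p : ℝ) : ‖x‖ ^ p = (‖x‖ ^ 2) ^ (p / 2) := by
  rw [← Real.rpow_natCast ‖x‖ 2, ← Real.rpow_mul (norm_nonneg x)]
  congr 1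
  push_cast
  ring

lemma parallelogram_sq (a b : ℂ) :
    ‖a + b‖ ^ 2 + ‖a - b‖ ^ 2 = 2 * (‖a‖ ^ 2 + ‖b‖ ^ 2) := by
  have := parallelogram_law_with_norm_mul ℝ a b
  simp only [← pow_two] at this
  linarith

lemma Dp_nonneg {p : ℝ} (hp : 1 ≤ p) (h2 : p < 2) (a b : ℂ) : 0 ≤ Dp p a b := by
  have hr0 : (0:ℝ) < p / 2 := by linarith
  have hr1 : p / 2 ≤ 1 := by linarith
  have P := parallelogram_sq a b
  have hm : (‖a + b‖ ^ 2 + ‖a - b‖ ^ 2) / 2 = ‖a‖ ^ 2 + ‖b‖ ^ 2 := by linarith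
  have h1 : (‖a + b‖ ^ 2) ^ (p/2) + (‖a - b‖ ^ 2) ^ (p/2)
      ≤ 2 * ((‖a‖ ^ 2 + ‖b‖ ^ 2) ^ (p/2)) := by
    have := aux_mid_concave (by positivity : (0:ℝ) ≤ ‖a + b‖ ^ 2)
      (by positivity : (0:ℝ) ≤ ‖a - b‖ ^ 2) hr0.le hr1
    rwa [hm] at this
  have h2' : (‖a‖ ^ 2 + ‖b‖ ^ 2) ^ (p/2) ≤ (‖a‖ ^ 2) ^ (p/2) + (‖b‖ ^ 2) ^ (p/2) :=
    aux_sub_weak (by positivity) (by positivity) hr0 hr1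
  simp only [Dp, abs_rpow_eq]
  linarith

lemma Dp_nonpos {p : ℝ} (h2 : 2 < p) (a b : ℂ) : Dp p a b ≤ 0 := by
  have hr1 : (1:ℝ) ≤ p / 2 := by linarith
  have P := parallelogram_sq a b
  have hm : (‖a + b‖ ^ 2 + ‖a - b‖ ^ 2) / 2 = ‖a‖ ^ 2 + ‖b‖ ^ 2 := by linarith
  have h1 : 2 * ((‖a‖ ^ 2 + ‖b‖ ^ 2) ^ (p/2))
      ≤ (‖a + b‖ ^ 2) ^ (p/2) + (‖a - b‖ ^ 2) ^ (p/2) := by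
    have := aux_mid_convex (by positivity : (0:ℝ) ≤ ‖a + b‖ ^ 2)
      (by positivity : (0:ℝ) ≤ ‖a - b‖ ^ 2) hr1
    rwa [hm] at this
  have h2' : (‖a‖ ^ 2) ^ (p/2) + (‖b‖ ^ 2) ^ (p/2) ≤ (‖a‖ ^ 2 + ‖b‖ ^ 2) ^ (p/2) :=
    aux_sup_weak (by positivity) (by positivity) hr1
  simp only [Dp, abs_rpow_eq]
  linarith

lemma Dp_eq_zero {p : ℝ} (hp : 0 < p) {a b : ℂ} (h : a * b = 0) : Dp p a b = 0 := by
  rcases mul_eq_zero.1 h with h | h <;> subst h <;>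
    simp [Dp, Real.zero_rpow hp.ne', zero_sub, zero_add, sub_zero, add_zero,
      norm_neg] <;> ring

lemma mul_eq_zero_of_Dp {p : ℝ} (hp : 1 ≤ p) (hp2 : p ≠ 2) {a b : ℂ}
    (h : Dp p a b = 0) : a * b = 0 := by
  by_contra hab
  have ha : a ≠ 0 := fun h' => hab (by simp [h'])
  have hb : b ≠ 0 := fun h' => hab (by simp [h'])
  have hA : (0:ℝ) < ‖a‖ ^ 2 := pow_pos (norm_pos_iff.2 ha) 2
  have hB : (0:ℝ) < ‖b‖ ^ 2 := pow_pos (norm_pos_iff.2 hb) 2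
  have P := parallelogram_sq a b
  have hm : (‖a + b‖ ^ 2 + ‖a - b‖ ^ 2) / 2 = ‖a‖ ^ 2 + ‖b‖ ^ 2 := by linarith
  rcases lt_or_gt_of_ne hp2 with hlt | hgt
  · have hr0 : (0:ℝ) < p / 2 := by linarith
    have hr1 : p / 2 < 1 := by linarith
    have h1 : (‖a + b‖ ^ 2) ^ (p/2) + (‖a - b‖ ^ 2) ^ (p/2)
        ≤ 2 * ((‖a‖ ^ 2 + ‖b‖ ^ 2) ^ (p/2)) := by
      have := aux_mid_concave (by positivity : (0:ℝ) ≤ ‖a + b‖ ^ 2)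
        (by positivity : (0:ℝ) ≤ ‖a - b‖ ^ 2) hr0.le hr1.le
      rwa [hm] at this
    have h2' : (‖a‖ ^ 2 + ‖b‖ ^ 2) ^ (p/2) < (‖a‖ ^ 2) ^ (p/2) + (‖b‖ ^ 2) ^ (p/2) :=
      aux_sub_strict hA hB hr0 hr1
    simp only [Dp, abs_rpow_eq] at h
    linarith
  · have hr1 : (1:ℝ) < p / 2 := by linarith
    have h1 : 2 * ((‖a‖ ^ 2 + ‖b‖ ^ 2) ^ (p/2))
        ≤ (‖a + b‖ ^ 2) ^ (p/2) + (‖a - b‖ ^ 2) ^ (p/2) := by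
      have := aux_mid_convex (by positivity : (0:ℝ) ≤ ‖a + b‖ ^ 2)
        (by positivity : (0:ℝ) ≤ ‖a - b‖ ^ 2) hr1.le
      rwa [hm] at this
    have h2' : (‖a‖ ^ 2) ^ (p/2) + (‖b‖ ^ 2) ^ (p/2) < (‖a‖ ^ 2 + ‖b‖ ^ 2) ^ (p/2) :=
      aux_sup_strict hA hB hr1
    simp only [Dp, abs_rpow_eq] at h
    linarith

lemma const_ne {p : ℝ} (hp : 1 ≤ p) (hp2 : p ≠ 2) : 4 - 2 * Real.sqrt 2 ^ p ≠ 0 := by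
  have hs : Real.sqrt 2 ^ p = (2:ℝ) ^ ((1/2) * p) := by
    rw [Real.sqrt_eq_rpow, ← Real.rpow_mul (by norm_num : (0:ℝ) ≤ 2)]
  rcases lt_or_gt_of_ne hp2 with h | h
  · have h2 : (2:ℝ) ^ ((1/2) * p) < 2 ^ (1:ℝ) :=
      Real.rpow_lt_rpow_of_exponent_lt one_lt_two (by linarith)
    rw [Real.rpow_one] at h2
    rw [hs]; linarith
  · have h2 : (2:ℝ) ^ (1:ℝ) < 2 ^ ((1/2) * p) :=
      Real.rpow_lt_rpow_of_exponent_lt one_lt_two (by linarith)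
    rw [Real.rpow_one] at h2
    rw [hs]; linarith

lemma sigmaPair_zero_iff {X : Type*} [MeasurableSpace X] (μ : Measure X) {p : ℝ}
    (hp : 1 ≤ p) (hp2 : p ≠ 2) {f g : X → ℂ}
    (hf : MemLp f (ENNReal.ofReal p) μ) (hg : MemLp g (ENNReal.ofReal p) μ) :
    sigmaPair μ p f g = 0 ↔ ∀ᵐ t ∂μ, f t * g t = 0 := by
  have hp0 : (0:ℝ) < p := by linarith
  have hpn0 : ENNReal.ofReal p ≠ 0 := ne_of_gt (ENNReal.ofReal_pos.2 hp0)
  have key : ∀ h : X → ℂ, MemLp h (ENNReal.ofReal p) μ →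
      Integrable (fun t => ‖h t‖ ^ p) μ := by
    intro h hh
    have h1 := hh.integrable_norm_rpow hpn0 ENNReal.ofReal_ne_top
    simpa only [ENNReal.toReal_ofReal hp0.le] using h1
  have intf := key f hf
  have intg := key g hg
  have intfmg : Integrable (fun t => ‖f t - g t‖ ^ p) μ := by
    simpa [Pi.sub_apply] using key (f - g) (hf.sub hg)
  have intfpg : Integrable (fun t => ‖f t + g t‖ ^ p) μ := by
    simpa [Pi.add_apply] using key (f + g) (hf.add hg)
  have intD : Integrable (fun t => Dp p (f t) (g t)) μ := by
    simp only [Dp]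
    exact ((intf.add intg).const_mul 2).sub (intfmg.add intfpg)
  have hT : 2 * (pnormP μ p f + pnormP μ p g) -
      (pnormP μ p (f - g) + pnormP μ p (f + g)) = ∫ t, Dp p (f t) (g t) ∂μ := by
    have i1 : Integrable (fun t => 2 * (‖f t‖ ^ p + ‖g t‖ ^ p)) μ := by
      exact (intf.add intg).const_mul 2
    have i2 : Integrable (fun t =>
        ‖f t - g t‖ ^ p + ‖f t + g t‖ ^ p) μ := by
      exact intfmg.add intfpg
    simp only [Dp, pnormP, Pi.sub_apply, Pi.add_apply]
    rw [integral_sub i1 i2,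
      integral_add intfmg intfpg, integral_const_mul,
      integral_add intf intg]
  constructor
  · intro h0
    have hc := const_ne hp hp2
    have habs : |2 * (pnormP μ p f + pnormP μ p g) -
        (pnormP μ p (f - g) + pnormP μ p (f + g))| = 0 := by
      rcases mul_eq_zero.1 h0 with h | h
      · exact absurd h (inv_ne_zero (abs_ne_zero.2 hc))
      · exact h
    have hTz : ∫ t, Dp p (f t) (g t) ∂μ = 0 := by
      rw [← hT]; exact abs_eq_zero.1 habs
    rcases lt_or_gt_of_ne hp2 with hlt | hgt
    · have hD0 := (integral_eq_zero_iff_of_nonneg_ae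
        (Filter.Eventually.of_forall fun t => Dp_nonneg hp hlt (f t) (g t)) intD).1 hTz
      filter_upwards [hD0] with t ht
      exact mul_eq_zero_of_Dp hp hp2 ht
    · have hTz' : ∫ t, - Dp p (f t) (g t) ∂μ = 0 := by
        rw [integral_neg, hTz, neg_zero]
      have hD0 := (integral_eq_zero_iff_of_nonneg_ae
        (Filter.Eventually.of_forall fun t => neg_nonneg.2 (Dp_nonpos hgt (f t) (g t)))
        intD.neg).1 hTz'
      filter_upwards [hD0] with t ht
      exact mul_eq_zero_of_Dp hp hp2 (by simpa [neg_eq_zero] using ht)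
  · intro hae
    have hDz : (fun t => Dp p (f t) (g t)) =ᵐ[μ] 0 := by
      filter_upwards [hae] with t ht
      exact Dp_eq_zero hp0 ht
    have hTz : ∫ t, Dp p (f t) (g t) ∂μ = 0 := by
      rw [integral_congr_ae hDz]; simp
    unfold sigmaPair
    rw [hT, hTz, abs_zero, mul_zero]

lemma sigmaPair_nonneg {X : Type*} [MeasurableSpace X] (μ : Measure X) (p : ℝ)
    (f g : X → ℂ) : 0 ≤ sigmaPair μ p f g :=
  mul_nonneg (inv_nonneg.2 (abs_nonneg _)) (abs_nonneg _)

theorem stmt19 (μ : Measure X) (p : ℝ) (hp : 1 ≤ p) (hp2 : p ≠ 2)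
    (S : Finset (List ℕ)) (φ : List ℕ → X → ℂ)
    (hmem : ∀ ν ∈ S, MemLp (φ ν) (ENNReal.ofReal p) μ) :
    ((∀ ν ∈ S, ∀ ν' ∈ S, ¬ ν <+: ν' → ¬ ν' <+: ν →
        ∀ᵐ t ∂μ, φ ν t * φ ν' t = 0) ∧
     (∀ ν ∈ S, ∀ ν' ∈ S, ν <+: ν' →
        ∀ᵐ t ∂μ, φ ν' t ≠ 0 → φ ν' t = φ ν t)) ↔
    sigmaMap μ p S φ = 0 := by
  have hsum : sigmaMap μ p S φ = 0 ↔
      (∀ q ∈ (S ×ˢ S).filter (fun q => ¬ q.1 <+: q.2 ∧ ¬ q.2 <+: q.1),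
        sigmaPair μ p (φ q.1) (φ q.2) = 0) ∧
      (∀ q ∈ (S ×ˢ S).filter (fun q => q.1 <+: q.2 ∧ q.1 ≠ q.2),
        sigmaPair μ p (φ q.2 - φ q.1) (φ q.2) = 0) := by
    unfold sigmaMap
    rw [add_eq_zero_iff_of_nonneg
        (Finset.sum_nonneg fun q _ => sigmaPair_nonneg μ p _ _)
        (Finset.sum_nonneg fun q _ => sigmaPair_nonneg μ p _ _),
      Finset.sum_eq_zero_iff_of_nonneg (fun q _ => sigmaPair_nonneg μ p _ _),
      Finset.sum_eq_zero_iff_of_nonneg (fun q _ => sigmaPair_nonneg μ p _ _)]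
  rw [hsum]
  constructor
  · rintro ⟨h1, h2⟩
    constructor
    · intro q hq
      rw [Finset.mem_filter, Finset.mem_product] at hq
      exact (sigmaPair_zero_iff μ hp hp2 (hmem _ hq.1.1) (hmem _ hq.1.2)).2
        (h1 q.1 hq.1.1 q.2 hq.1.2 hq.2.1 hq.2.2)
    · intro q hq
      rw [Finset.mem_filter, Finset.mem_product] at hq
      refine (sigmaPair_zero_iff μ hp hp2
        ((hmem _ hq.1.2).sub (hmem _ hq.1.1)) (hmem _ hq.1.2)).2 ?_
      filter_upwards [h2 q.1 hq.1.1 q.2 hq.1.2 hq.2.1] with t ht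
      by_cases hb : φ q.2 t = 0
      · simp [Pi.sub_apply, hb]
      · simp [Pi.sub_apply, ht hb, sub_self]
  · rintro ⟨H1, H2⟩
    constructor
    · intro ν hν ν' hν' hn1 hn2
      exact (sigmaPair_zero_iff μ hp hp2 (hmem _ hν) (hmem _ hν')).1
        (H1 (ν, ν') (Finset.mem_filter.2 ⟨Finset.mem_product.2 ⟨hν, hν'⟩, hn1, hn2⟩))
    · intro ν hν ν' hν' hpre
      by_cases he : ν = ν'
      · subst he
        exact Filter.Eventually.of_forall fun t _ => rfl
      · have := (sigmaPair_zero_iff μ hp hp2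
          ((hmem _ hν').sub (hmem _ hν)) (hmem _ hν')).1
          (H2 (ν, ν') (Finset.mem_filter.2 ⟨Finset.mem_product.2 ⟨hν, hν'⟩, hpre, he⟩))
        filter_upwards [this] with t ht hb
        rcases mul_eq_zero.1 ht with h | h
        · have : φ ν' t - φ ν t = 0 := by simpa [Pi.sub_apply] using h
          linear_combination this
        · exact absurd h hb
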